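/- (Corollary 1.) Suppose the final reward ρ_T : Δ(S) → ℝ is convex on Δ(S) and, for every t ∈ {0, …, T−1} and every a ∈ A, the reward b ↦ ρ_t(b, a) is convex on Δ(S). Then for every t ∈ {0, …, T−1}, every node q ∈ Q_t, every finite index set J, every probability weight vector (g_j)_{j∈J} (g_j ≥ 0, Σ_j g_j = 1), and every family of beliefs (b_j)_{j∈J} in Δ(S), one has Σ_{j∈J} g_j · V_t(b_j, q) ≥ V_t( Σ_{j∈J} g_j · b_j, q ), where the convex combination Σ_j g_j · b_j lies in Δ(S). -/

import Mathlib

/-- The standard probability simplex Δ(S) of beliefs over a finite state set `S`. -/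
def simplex (S : Type*) [Fintype S] : Set (S → ℝ) :=
  {b | (∀ s, 0 ≤ b s) ∧ ∑ s, b s = 1}

/-- Observation likelihood `η(b, z)` for transition kernel `Ps` and observation kernel `Pz`. -/
noncomputable def eta {S Z : Type*} [Fintype S] (Ps : S → S → ℝ) (Pz : S → Z → ℝ)
    (b : S → ℝ) (z : Z) : ℝ :=
  ∑ s', Pz s' z * ∑ s, Ps s s' * b s

/-- Bayes posterior `ζ(b, z)` for transition kernel `Ps` and observation kernel `Pz`. -/
noncomputable def zeta {S Z : Type*} [Fintype S] (Ps : S → S → ℝ) (Pz : S → Z → ℝ)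
    (b : S → ℝ) (z : Z) : S → ℝ :=
  fun s' => Pz s' z * (∑ s, Ps s s' * b s) / eta Ps Pz b z

section Aux
variable {S Z : Type*} [Fintype S] [Fintype Z]

lemma simplex_combo {J : Type*} [Fintype J] (g : J → ℝ) (bf : J → (S → ℝ))
    (hg0 : ∀ j, 0 ≤ g j) (hg1 : ∑ j, g j = 1) (hbf : ∀ j, bf j ∈ simplex S) :
    (∑ j, g j • bf j) ∈ simplex S := by
  constructor
  · intro s
    simp only [Finset.sum_apply, Pi.smul_apply, smul_eq_mul]
    exact Finset.sum_nonneg fun j _ => mul_nonneg (hg0 j) ((hbf j).1 s)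
  · simp only [Finset.sum_apply, Pi.smul_apply, smul_eq_mul]
    rw [Finset.sum_comm]
    calc ∑ j, ∑ s, g j * bf j s = ∑ j, g j * ∑ s, bf j s := by
          simp [Finset.mul_sum]
      _ = ∑ j : J, g j := by
          refine Finset.sum_congr rfl fun j _ => ?_
          rw [(hbf j).2, mul_one]
      _ = 1 := hg1

lemma eta_pos (Ps : S → S → ℝ) (Pz : S → Z → ℝ)
    (hPs0 : ∀ s s', 0 ≤ Ps s s') (hPs1 : ∀ s, ∑ s', Ps s s' = 1)
    (hPz0 : ∀ s' z, 0 < Pz s' z) {b : S → ℝ} (hb : b ∈ simplex S) (z : Z) :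
    0 < eta Ps Pz b z := by
  have hm0 : ∀ s', 0 ≤ ∑ s, Ps s s' * b s := fun s' =>
    Finset.sum_nonneg fun s _ => mul_nonneg (hPs0 s s') (hb.1 s)
  have hm1 : ∑ s', ∑ s, Ps s s' * b s = 1 := by
    rw [Finset.sum_comm]
    calc ∑ s, ∑ s', Ps s s' * b s = ∑ s, (∑ s', Ps s s') * b s := by
          simp [Finset.sum_mul]
      _ = ∑ s, b s := by
          refine Finset.sum_congr rfl fun s _ => ?_
          rw [hPs1 s, one_mul]
      _ = 1 := hb.2
  have hex : ∃ s' ∈ (Finset.univ : Finset S), 0 < ∑ s, Ps s s' * b s := by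
    by_contra h
    push_neg at h
    have hz : ∀ s' ∈ (Finset.univ : Finset S), (∑ s, Ps s s' * b s) = 0 :=
      fun s' hs' => le_antisymm (h s' hs') (hm0 s')
    rw [Finset.sum_congr rfl hz] at hm1
    simp at hm1
  obtain ⟨s', _, hs'⟩ := hex
  refine Finset.sum_pos' (fun s'' _ => mul_nonneg (hPz0 s'' z).le (hm0 s'')) ?_
  exact ⟨s', Finset.mem_univ s', mul_pos (hPz0 s' z) hs'⟩

lemma zeta_mem (Ps : S → S → ℝ) (Pz : S → Z → ℝ)
    (hPs0 : ∀ s s', 0 ≤ Ps s s') (hPs1 : ∀ s, ∑ s', Ps s s' = 1)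
    (hPz0 : ∀ s' z, 0 < Pz s' z) {b : S → ℝ} (hb : b ∈ simplex S) (z : Z) :
    zeta Ps Pz b z ∈ simplex S := by
  have hη := eta_pos Ps Pz hPs0 hPs1 hPz0 hb z
  constructor
  · intro s'
    exact div_nonneg (mul_nonneg (hPz0 s' z).le
      (Finset.sum_nonneg fun s _ => mul_nonneg (hPs0 s s') (hb.1 s))) hη.le
  · unfold zeta
    rw [← Finset.sum_div]
    exact div_self hη.ne'

lemma eta_linear {J : Type*} [Fintype J] (Ps : S → S → ℝ) (Pz : S → Z → ℝ)
    (g : J → ℝ) (bf : J → (S → ℝ)) (z : Z) :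
    eta Ps Pz (∑ j, g j • bf j) z = ∑ j, g j * eta Ps Pz (bf j) z := by
  unfold eta
  simp only [Finset.sum_apply, Pi.smul_apply, smul_eq_mul, Finset.mul_sum]
  conv_lhs => enter [2, s']; rw [Finset.sum_comm]
  rw [Finset.sum_comm]
  refine Finset.sum_congr rfl fun j _ => Finset.sum_congr rfl fun s' _ =>
    Finset.sum_congr rfl fun s _ => ?_
  ring

lemma zeta_combo {J : Type*} [Fintype J] (Ps : S → S → ℝ) (Pz : S → Z → ℝ)
    (hPs0 : ∀ s s', 0 ≤ Ps s s') (hPs1 : ∀ s, ∑ s', Ps s s' = 1)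
    (hPz0 : ∀ s' z, 0 < Pz s' z)
    (g : J → ℝ) (bf : J → (S → ℝ))
    (hg0 : ∀ j, 0 ≤ g j) (hg1 : ∑ j, g j = 1) (hbf : ∀ j, bf j ∈ simplex S) (z : Z) :
    zeta Ps Pz (∑ j, g j • bf j) z =
      ∑ j, (g j * eta Ps Pz (bf j) z / eta Ps Pz (∑ j, g j • bf j) z) •
        zeta Ps Pz (bf j) z := by
  have hηj : ∀ j, 0 < eta Ps Pz (bf j) z :=
    fun j => eta_pos Ps Pz hPs0 hPs1 hPz0 (hbf j) z
  have hη : 0 < eta Ps Pz (∑ j, g j • bf j) z :=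
    eta_pos Ps Pz hPs0 hPs1 hPz0 (simplex_combo g bf hg0 hg1 hbf) z
  funext s'
  simp only [Finset.sum_apply, Pi.smul_apply, smul_eq_mul]
  unfold zeta
  simp only [Finset.sum_apply, Pi.smul_apply, smul_eq_mul]
  rw [eq_comm]
  calc ∑ j, g j * eta Ps Pz (bf j) z / eta Ps Pz (∑ j, g j • bf j) z *
        (Pz s' z * (∑ s, Ps s s' * bf j s) / eta Ps Pz (bf j) z)
      = ∑ j, g j * (Pz s' z * (∑ s, Ps s s' * bf j s)) /
          eta Ps Pz (∑ j, g j • bf j) z := by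
        refine Finset.sum_congr rfl fun j _ => ?_
        have h : g j * eta Ps Pz (bf j) z / eta Ps Pz (∑ j, g j • bf j) z *
            (Pz s' z * (∑ s, Ps s s' * bf j s) / eta Ps Pz (bf j) z) =
            g j * (Pz s' z * (∑ s, Ps s s' * bf j s)) *
              (eta Ps Pz (bf j) z / eta Ps Pz (bf j) z) /
              eta Ps Pz (∑ j, g j • bf j) z := by ring
        rw [h, div_self (hηj j).ne', mul_one]
    _ = (∑ j, g j * (Pz s' z * (∑ s, Ps s s' * bf j s))) /
          eta Ps Pz (∑ j, g j • bf j) z := by rw [Finset.sum_div]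
    _ = Pz s' z * (∑ s, Ps s s' * ∑ j, g j * bf j s) /
          eta Ps Pz (∑ j, g j • bf j) z := by
        congr 1
        simp only [Finset.mul_sum]
        rw [Finset.sum_comm]
        refine Finset.sum_congr rfl fun s _ => Finset.sum_congr rfl fun j _ => ?_
        ring

lemma core {J : Type*} [Fintype J] (Ps : S → S → ℝ) (Pz : S → Z → ℝ)
    (hPs0 : ∀ s s', 0 ≤ Ps s s') (hPs1 : ∀ s, ∑ s', Ps s s' = 1)
    (hPz0 : ∀ s' z, 0 < Pz s' z)
    (r : (S → ℝ) → ℝ) (hr : ConvexOn ℝ (simplex S) r)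
    (F : Z → (S → ℝ) → ℝ)
    (hF : ∀ z (w : J → ℝ) (c : J → (S → ℝ)), (∀ j, 0 ≤ w j) → ∑ j, w j = 1 →
      (∀ j, c j ∈ simplex S) → F z (∑ j, w j • c j) ≤ ∑ j, w j * F z (c j))
    (g : J → ℝ) (bf : J → (S → ℝ))
    (hg0 : ∀ j, 0 ≤ g j) (hg1 : ∑ j, g j = 1) (hbf : ∀ j, bf j ∈ simplex S) :
    r (∑ j, g j • bf j) +
      ∑ z, eta Ps Pz (∑ j, g j • bf j) z * F z (zeta Ps Pz (∑ j, g j • bf j) z) ≤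
    ∑ j, g j * (r (bf j) + ∑ z, eta Ps Pz (bf j) z * F z (zeta Ps Pz (bf j) z)) := by
  have h1 : r (∑ j, g j • bf j) ≤ ∑ j, g j * r (bf j) := by
    have := hr.map_sum_le (t := Finset.univ) (fun j _ => hg0 j) (by simpa using hg1)
      (fun j _ => hbf j)
    simpa [smul_eq_mul] using this
  have h2 : ∀ z, eta Ps Pz (∑ j, g j • bf j) z * F z (zeta Ps Pz (∑ j, g j • bf j) z) ≤
      ∑ j, g j * (eta Ps Pz (bf j) z * F z (zeta Ps Pz (bf j) z)) := by
    intro z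
    set η := eta Ps Pz (∑ j, g j • bf j) z with hηdef
    have hη : 0 < η := eta_pos Ps Pz hPs0 hPs1 hPz0 (simplex_combo g bf hg0 hg1 hbf) z
    have hηjpos : ∀ j, 0 < eta Ps Pz (bf j) z :=
      fun j => eta_pos Ps Pz hPs0 hPs1 hPz0 (hbf j) z
    set w : J → ℝ := fun j => g j * eta Ps Pz (bf j) z / η with hwdef
    have hw0 : ∀ j, 0 ≤ w j := fun j =>
      div_nonneg (mul_nonneg (hg0 j) (hηjpos j).le) hη.le
    have hw1 : ∑ j, w j = 1 := by
      rw [← Finset.sum_div, ← eta_linear Ps Pz g bf z, ← hηdef, div_self hη.ne']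
    have hζ := zeta_combo Ps Pz hPs0 hPs1 hPz0 g bf hg0 hg1 hbf z
    have hstep : F z (zeta Ps Pz (∑ j, g j • bf j) z) ≤
        ∑ j, w j * F z (zeta Ps Pz (bf j) z) := by
      rw [hζ]
      exact hF z w _ hw0 hw1 (fun j => zeta_mem Ps Pz hPs0 hPs1 hPz0 (hbf j) z)
    calc η * F z (zeta Ps Pz (∑ j, g j • bf j) z)
        ≤ η * ∑ j, w j * F z (zeta Ps Pz (bf j) z) := by
          exact mul_le_mul_of_nonneg_left hstep hη.le
      _ = ∑ j, g j * (eta Ps Pz (bf j) z * F z (zeta Ps Pz (bf j) z)) := by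
          rw [Finset.mul_sum]
          refine Finset.sum_congr rfl fun j _ => ?_
          rw [hwdef]
          field_simp
  calc r (∑ j, g j • bf j) +
        ∑ z, eta Ps Pz (∑ j, g j • bf j) z * F z (zeta Ps Pz (∑ j, g j • bf j) z)
      ≤ (∑ j, g j * r (bf j)) +
        ∑ z, ∑ j, g j * (eta Ps Pz (bf j) z * F z (zeta Ps Pz (bf j) z)) :=
        add_le_add h1 (Finset.sum_le_sum fun z _ => h2 z)
    _ = ∑ j, g j * (r (bf j) + ∑ z, eta Ps Pz (bf j) z * F z (zeta Ps Pz (bf j) z)) := by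
        rw [Finset.sum_comm]
        rw [← Finset.sum_add_distrib]
        refine Finset.sum_congr rfl fun j _ => ?_
        rw [mul_add, Finset.mul_sum]

end Aux

/-- **Corollary 1.** Under convex rewards, the expected value of the value function over a
probability mass function on beliefs is at least the value at the expected belief:
`∑ j, g j * V t (b j) q ≥ V t (∑ j, g j • b j) q`, and the convex combination is a belief. -/
theorem value_function_jensen_lower_bound
    {S Z A : Type*} [Fintype S] [Fintype Z] [Fintype A]
    [Nonempty S] [Nonempty Z] [Nonempty A]
    (Ps : A → S → S → ℝ) (Pz : A → S → Z → ℝ)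
    (hPs0 : ∀ a s s', 0 ≤ Ps a s s') (hPs1 : ∀ a s, ∑ s', Ps a s s' = 1)
    (hPz0 : ∀ a s' z, 0 < Pz a s' z) (hPz1 : ∀ a s', ∑ z, Pz a s' z = 1)
    (T : ℕ) (hT : 1 ≤ T)
    (Q : ℕ → Type) [∀ t, Nonempty (Q t)]
    (γ : ∀ t, Q t → A) (lam : ∀ t, Q t → Z → Q (t + 1))
    (ρ : ℕ → (S → ℝ) → A → ℝ) (ρT : (S → ℝ) → ℝ)
    (hρT : ConvexOn ℝ (simplex S) ρT)
    (hρ : ∀ t < T, ∀ a : A, ConvexOn ℝ (simplex S) (fun b => ρ t b a))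
    (V : ∀ t, (S → ℝ) → Q t → ℝ)
    (hVlast : ∀ (b : S → ℝ) (q : Q (T - 1)),
      V (T - 1) b q = ρ (T - 1) b (γ (T - 1) q) +
        ∑ z, eta (Ps (γ (T - 1) q)) (Pz (γ (T - 1) q)) b z *
          ρT (zeta (Ps (γ (T - 1) q)) (Pz (γ (T - 1) q)) b z))
    (hVstep : ∀ t, t < T - 1 → ∀ (b : S → ℝ) (q : Q t),
      V t b q = ρ t b (γ t q) +
        ∑ z, eta (Ps (γ t q)) (Pz (γ t q)) b z *
          V (t + 1) (zeta (Ps (γ t q)) (Pz (γ t q)) b z) (lam t q z))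
    (t : ℕ) (ht : t < T) (q : Q t)
    (J : Type*) [Fintype J] (g : J → ℝ) (bf : J → (S → ℝ))
    (hg0 : ∀ j, 0 ≤ g j) (hg1 : ∑ j, g j = 1)
    (hbf : ∀ j, bf j ∈ simplex S) :
    (∑ j, g j • bf j) ∈ simplex S ∧
      ∑ j, g j * V t (bf j) q ≥ V t (∑ j, g j • bf j) q := by
  refine ⟨simplex_combo g bf hg0 hg1 hbf, ?_⟩
  have key : ∀ k t, t + k + 1 = T → ∀ (q : Q t) (g : J → ℝ) (bf : J → (S → ℝ)),
      (∀ j, 0 ≤ g j) → ∑ j, g j = 1 → (∀ j, bf j ∈ simplex S) →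
      V t (∑ j, g j • bf j) q ≤ ∑ j, g j * V t (bf j) q := by
    intro k
    induction k with
    | zero =>
      intro t htk q g bf hg0 hg1 hbf
      have ht' : t = T - 1 := by omega
      subst ht'
      have htT : T - 1 < T := by omega
      simp only [hVlast]
      exact core (Ps (γ (T - 1) q)) (Pz (γ (T - 1) q))
        (hPs0 _) (hPs1 _) (hPz0 _)
        (fun b => ρ (T - 1) b (γ (T - 1) q)) (hρ (T - 1) htT _)
        (fun _ c => ρT c)
        (fun z w c hw0 hw1 hc => by
          have := hρT.map_sum_le (t := Finset.univ) (fun j _ => hw0 j)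
            (by simpa using hw1) (fun j _ => hc j)
          simpa [smul_eq_mul] using this)
        g bf hg0 hg1 hbf
    | succ k ih =>
      intro t htk q g bf hg0 hg1 hbf
      have ht' : t < T - 1 := by omega
      have htT : t < T := by omega
      simp only [hVstep t ht']
      exact core (Ps (γ t q)) (Pz (γ t q))
        (hPs0 _) (hPs1 _) (hPz0 _)
        (fun b => ρ t b (γ t q)) (hρ t htT _)
        (fun z c => V (t + 1) c (lam t q z))
        (fun z w c hw0 hw1 hc => ih (t + 1) (by omega) (lam t q z) w c hw0 hw1 hc)
        g bf hg0 hg1 hbf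
  exact key (T - 1 - t) t (by omega) q g bf hg0 hg1 hbf
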